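/- arXiv:1510.04931 — 2 statements merged into one kernel-verified Lean document; each statement's English description precedes it below -/
import Mathlib

section
/- (Emulation, core construction.) Assume Γ_1 > 0 and e⁰ ∈ E with r(e⁰) = 0. Let ξ be a CCS with full support and π a policy such that V^π_ξ(h) > 0 for every history h consistent with π. Then for every ε > 0 there exists ε' ∈ (0,1] such that, with ν the π-dogmatic environment for ξ and ξ' := (1/2)·ν + (ε'/2)·ξ, every ξ'-optimal policy π* satisfies |V^{π*}_μ(ϵ) − V^π_μ(ϵ)| < ε for every CCS μ (where ϵ is the empty history). -/
open scoped Classical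

/-- A history: a finite alternating sequence of action–percept pairs. -/
abbrev Hist (A E : Type*) := List (A × E)

/-- A policy maps histories to actions. -/
abbrev Policy (A E : Type*) := Hist A E → A

/-- A chronological conditional semimeasure (CCS, environment):
values in `[0,1]`, and the chronological semimeasure condition. -/
structure CCS (A E : Type*) [Fintype E] where
  val : Hist A E → ℝ
  nonneg : ∀ h, 0 ≤ val h
  le_one : ∀ h, val h ≤ 1
  chrono : ∀ (h : Hist A E) (a : A), (∑ e : E, val (h ++ [(a, e)])) ≤ val h

/-- `Gam γ t = Γ_t = ∑_{i ≥ t} γ_i`, the discount normalization factor. -/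
noncomputable def Gam (γ : ℕ → ℝ) (t : ℕ) : ℝ := ∑' i : ℕ, γ (t + i)

/-- Extend a history by a list of percepts, with actions chosen by the policy `π`. -/
def extendH {A E : Type*} (π : Policy A E) : Hist A E → List E → Hist A E
  | h, [] => h
  | h, e :: es => extendH π (h ++ [(π h, e)]) es

/-- The value `V^π_ν(ae_{<t})` of policy `π` in environment `ν` given history `h = ae_{<t}`
(with `t = h.length + 1`); `0` whenever `Γ_t ≤ 0` or `ν(e_{<t} ∣ a_{<t}) ≤ 0`. -/
noncomputable def V {A E : Type*} [Fintype E] (γ : ℕ → ℝ) (r : E → ℝ)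
    (π : Policy A E) (ν : CCS A E) (h : Hist A E) : ℝ :=
  if 0 < Gam γ (h.length + 1) ∧ 0 < ν.val h then
    (1 / (Gam γ (h.length + 1) * ν.val h)) *
      ∑' n : ℕ, γ (h.length + 1 + n) *
        ∑ es : Fin (n + 1) → E,
          r (es (Fin.last n)) * ν.val (extendH π h (List.ofFn es))
  else 0

/-- The value `V^π_ν(h a)` of a history ending in the action `a`:
the action at time `t` is `a`, and `π` is followed from time `t+1` on. -/
noncomputable def Vact {A E : Type*} [Fintype E] (γ : ℕ → ℝ) (r : E → ℝ)
    (π : Policy A E) (ν : CCS A E) (h : Hist A E) (a : A) : ℝ :=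
  V γ r (fun h' => if h' = h then a else π h') ν h

/-- The optimal value `V^*_ν(h) = sup_π V^π_ν(h)`. -/
noncomputable def VOpt {A E : Type*} [Fintype E] (γ : ℕ → ℝ) (r : E → ℝ)
    (ν : CCS A E) (h : Hist A E) : ℝ :=
  ⨆ π : Policy A E, V γ r π ν h

/-- The optimal value `V^*_ν(h a)` of a history ending in an action. -/
noncomputable def VOptAct {A E : Type*} [Fintype E] (γ : ℕ → ℝ) (r : E → ℝ)
    (ν : CCS A E) (h : Hist A E) (a : A) : ℝ :=
  ⨆ π : Policy A E, Vact γ r π ν h a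

/-- A history is consistent with `π` iff each of its actions is the one chosen by `π`. -/
def Consistent {A E : Type*} (π : Policy A E) (h : Hist A E) : Prop :=
  ∀ (k : ℕ) (hk : k < h.length), (h.get ⟨k, hk⟩).1 = π (h.take k)

/-- Auxiliary function for the dogmatic environment: `pre` is the consistent
prefix processed so far, the second argument is the rest of the history. -/
noncomputable def dogmaAux {A E : Type*} [Fintype E] (ξ : CCS A E) (π : Policy A E)
    (e0 : E) : Hist A E → Hist A E → ℝ
  | pre, [] => ξ.val pre
  | pre, (a, e) :: rest =>
    if a = π pre then dogmaAux ξ π e0 (pre ++ [(a, e)]) rest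
    else if e = e0 ∧ ∀ p ∈ rest, p.2 = e0 then ξ.val pre else 0

/-- The `π`-dogmatic environment for `ξ`: mimics `ξ` while the actions follow `π`;
from the first deviation on it deterministically emits `e0` and freezes the mass. -/
noncomputable def dogma {A E : Type*} [Fintype E] (ξ : CCS A E) (π : Policy A E)
    (e0 : E) (h : Hist A E) : ℝ :=
  dogmaAux ξ π e0 [] h

/-- A CCS has full support iff it is positive on every history. -/
def FullSupport {A E : Type*} [Fintype E] (ξ : CCS A E) : Prop :=
  ∀ h : Hist A E, 0 < ξ.val h

section Lemmas
variable {A E : Type*} [Fintype E]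

lemma sum_fin_succ {n : ℕ} (f : (Fin (n+1) → E) → ℝ) :
    ∑ es : Fin (n+1) → E, f es = ∑ e : E, ∑ es : Fin n → E, f (Fin.cons e es) := by
  rw [← (Fin.consEquiv (fun _ => E)).sum_comp f, Fintype.sum_prod_type]
  rfl

lemma ofFn_cons {n : ℕ} (e : E) (es : Fin n → E) :
    List.ofFn (Fin.cons e es : Fin (n+1) → E) = e :: List.ofFn es := by
  rw [List.ofFn_succ]
  simp

lemma sumExt_le (ν : CCS A E) (τ : Policy A E) :
    ∀ (n : ℕ) (h : Hist A E), (∑ es : Fin n → E, ν.val (extendH τ h (List.ofFn es))) ≤ ν.val h := by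
  intro n
  induction n with
  | zero => intro h; simp [extendH]
  | succ n ih =>
    intro h
    rw [sum_fin_succ (fun es => ν.val (extendH τ h (List.ofFn es)))]
    calc ∑ e : E, ∑ es : Fin n → E, ν.val (extendH τ h (List.ofFn (Fin.cons e es)))
        ≤ ∑ e : E, ν.val (h ++ [(τ h, e)]) := by
          apply Finset.sum_le_sum
          intro e _
          simpa [ofFn_cons, extendH] using ih (h ++ [(τ h, e)])
      _ ≤ ν.val h := ν.chrono h (τ h)

end Lemmas
set_option linter.unusedSectionVars false
section Lemmas2
variable {A E : Type*} [Fintype E]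

/-- the reward-weighted sum appearing in `V`. -/
noncomputable def rsum (r : E → ℝ) (τ : Policy A E) (ν : CCS A E) (h : Hist A E) (n : ℕ) : ℝ :=
  ∑ es : Fin (n + 1) → E, r (es (Fin.last n)) * ν.val (extendH τ h (List.ofFn es))

lemma rsum_nonneg (r : E → ℝ) (hr : ∀ e : E, 0 ≤ r e ∧ r e ≤ 1)
    (τ : Policy A E) (ν : CCS A E) (h : Hist A E) (n : ℕ) : 0 ≤ rsum r τ ν h n :=
  Finset.sum_nonneg fun es _ => mul_nonneg (hr _).1 (ν.nonneg _)

lemma rsum_le (r : E → ℝ) (hr : ∀ e : E, 0 ≤ r e ∧ r e ≤ 1)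
    (τ : Policy A E) (ν : CCS A E) (h : Hist A E) (n : ℕ) : rsum r τ ν h n ≤ ν.val h := by
  refine le_trans (Finset.sum_le_sum (fun es _ => ?_)) (sumExt_le ν τ (n+1) h)
  calc r (es (Fin.last n)) * ν.val (extendH τ h (List.ofFn es))
      ≤ 1 * ν.val (extendH τ h (List.ofFn es)) :=
        mul_le_mul_of_nonneg_right (hr _).2 (ν.nonneg _)
    _ = ν.val (extendH τ h (List.ofFn es)) := one_mul _

lemma summable_shift {γ : ℕ → ℝ} (hγs : Summable γ) (t : ℕ) :
    Summable (fun n => γ (t + n)) := by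
  have := (summable_nat_add_iff t).2 hγs
  simpa [add_comm] using this

lemma Gam_nonneg {γ : ℕ → ℝ} (hγ0 : ∀ t, 0 ≤ γ t) (t : ℕ) : 0 ≤ Gam γ t :=
  tsum_nonneg fun i => hγ0 _

lemma summable_V {γ : ℕ → ℝ} (hγ0 : ∀ t, 0 ≤ γ t) (hγs : Summable γ)
    (r : E → ℝ) (hr : ∀ e : E, 0 ≤ r e ∧ r e ≤ 1)
    (τ : Policy A E) (ν : CCS A E) (h : Hist A E) (t : ℕ) :
    Summable (fun n => γ (t + n) * rsum r τ ν h n) := by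
  apply Summable.of_nonneg_of_le
    (fun n => mul_nonneg (hγ0 _) (rsum_nonneg r hr τ ν h n))
    (fun n => mul_le_mul_of_nonneg_left (rsum_le r hr τ ν h n) (hγ0 _))
  exact (summable_shift hγs t).mul_right _

lemma V_eq (γ : ℕ → ℝ) (r : E → ℝ) (τ : Policy A E) (ν : CCS A E) (h : Hist A E) :
    V γ r τ ν h = if 0 < Gam γ (h.length + 1) ∧ 0 < ν.val h then
      (1 / (Gam γ (h.length + 1) * ν.val h)) *
        ∑' n : ℕ, γ (h.length + 1 + n) * rsum r τ ν h n
    else 0 := rfl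

lemma tsum_V_le {γ : ℕ → ℝ} (hγ0 : ∀ t, 0 ≤ γ t) (hγs : Summable γ)
    (r : E → ℝ) (hr : ∀ e : E, 0 ≤ r e ∧ r e ≤ 1)
    (τ : Policy A E) (ν : CCS A E) (h : Hist A E) (t : ℕ) :
    ∑' n : ℕ, γ (t + n) * rsum r τ ν h n ≤ Gam γ t * ν.val h := by
  have : ∑' n : ℕ, γ (t + n) * ν.val h = Gam γ t * ν.val h := tsum_mul_right
  rw [← this]
  exact Summable.tsum_le_tsum
    (fun n => mul_le_mul_of_nonneg_left (rsum_le r hr τ ν h n) (hγ0 _))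
    (summable_V hγ0 hγs r hr τ ν h t)
    ((summable_shift hγs t).mul_right _)

lemma V_nonneg {γ : ℕ → ℝ} (hγ0 : ∀ t, 0 ≤ γ t)
    (r : E → ℝ) (hr : ∀ e : E, 0 ≤ r e ∧ r e ≤ 1)
    (τ : Policy A E) (ν : CCS A E) (h : Hist A E) : 0 ≤ V γ r τ ν h := by
  rw [V_eq]
  split
  · next hc =>
    apply mul_nonneg
    · have := hc.1; have := hc.2; positivity
    · exact tsum_nonneg fun n => mul_nonneg (hγ0 _) (rsum_nonneg r hr τ ν h n)
  · exact le_refl 0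

lemma V_le_one {γ : ℕ → ℝ} (hγ0 : ∀ t, 0 ≤ γ t) (hγs : Summable γ)
    (r : E → ℝ) (hr : ∀ e : E, 0 ≤ r e ∧ r e ≤ 1)
    (τ : Policy A E) (ν : CCS A E) (h : Hist A E) : V γ r τ ν h ≤ 1 := by
  rw [V_eq]
  split
  · next hc =>
    rw [div_mul_eq_mul_div, one_mul, div_le_one (by have := hc.1; have := hc.2; positivity)]
    exact tsum_V_le hγ0 hγs r hr τ ν h _
  · exact zero_le_one

lemma bddAbove_V {γ : ℕ → ℝ} (hγ0 : ∀ t, 0 ≤ γ t) (hγs : Summable γ)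
    (r : E → ℝ) (hr : ∀ e : E, 0 ≤ r e ∧ r e ≤ 1)
    (ν : CCS A E) (h : Hist A E) :
    BddAbove (Set.range fun τ : Policy A E => V γ r τ ν h) := by
  refine ⟨1, ?_⟩
  rintro x ⟨τ, rfl⟩
  exact V_le_one hγ0 hγs r hr τ ν h

end Lemmas2
section Lemmas3
variable {A E : Type*} [Fintype E]

lemma consistent_nil (π : Policy A E) : Consistent π ([] : Hist A E) := by
  intro k hk; simp at hk

lemma consistent_snoc {π : Policy A E} {h : Hist A E} (hc : Consistent π h) (e : E) :
    Consistent π (h ++ [(π h, e)]) := by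
  intro k hk
  have hk' : k < h.length + 1 := by simpa using hk
  rcases lt_or_eq_of_le (Nat.lt_succ_iff.mp hk') with hlt | heq
  · have h1 : (h ++ [(π h, e)]).get ⟨k, hk⟩ = h.get ⟨k, hlt⟩ := by
      simp [List.getElem_append_left hlt]
    have h2 : (h ++ [(π h, e)]).take k = h.take k := by
      rw [List.take_append_of_le_length (le_of_lt hlt)]
    rw [h1, h2]
    exact hc k hlt
  · subst heq
    have h1 : (h ++ [(π h, e)]).get ⟨h.length, hk⟩ = (π h, e) := by
      simp
    have h2 : (h ++ [(π h, e)]).take h.length = h := by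
      simp [List.take_left]
    rw [h1, h2]

lemma consistent_extendH {π : Policy A E} :
    ∀ (l : List E) (h : Hist A E), Consistent π h → Consistent π (extendH π h l) := by
  intro l
  induction l with
  | nil => intro h hc; exact hc
  | cons e l ih => intro h hc; exact ih _ (consistent_snoc hc e)

lemma extendH_decomp (τ : Policy A E) :
    ∀ (l : List E) (h : Hist A E), ∃ tail : Hist A E,
      extendH τ h l = h ++ tail ∧ tail.map Prod.snd = l := by
  intro l
  induction l with
  | nil => intro h; exact ⟨[], by simp [extendH]⟩
  | cons e l ih =>
    intro h
    obtain ⟨tail, h1, h2⟩ := ih (h ++ [(τ h, e)])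
    exact ⟨(τ h, e) :: tail, by simp [extendH, h1], by simp [h2]⟩

lemma dogmaAux_append {ξ : CCS A E} {π : Policy A E} {e0 : E} :
    ∀ (h pre rest : Hist A E),
      (∀ (k : ℕ) (hk : k < h.length), (h.get ⟨k, hk⟩).1 = π (pre ++ h.take k)) →
      dogmaAux ξ π e0 pre (h ++ rest) = dogmaAux ξ π e0 (pre ++ h) rest := by
  intro h
  induction h with
  | nil => intro pre rest _; simp
  | cons p h ih =>
    intro pre rest hc
    obtain ⟨a, e⟩ := p
    have ha : a = π pre := by simpa using hc 0 (by simp)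
    have : dogmaAux ξ π e0 pre ((a, e) :: (h ++ rest)) =
        dogmaAux ξ π e0 (pre ++ [(a, e)]) (h ++ rest) := by
      rw [dogmaAux]
      simp [ha]
    rw [List.cons_append, this, ih (pre ++ [(a, e)]) rest ?_]
    · simp
    · intro k hk
      have := hc (k + 1) (by simpa using Nat.succ_lt_succ hk)
      simpa using this

lemma dogma_eq_of_consistent {ξ : CCS A E} {π : Policy A E} {e0 : E} {h : Hist A E}
    (hc : Consistent π h) : dogma ξ π e0 h = ξ.val h := by
  have := dogmaAux_append (ξ := ξ) (π := π) (e0 := e0) h [] [] (by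
    intro k hk; simpa using hc k hk)
  simpa [dogma, dogmaAux] using this

lemma dogma_dev {ξ : CCS A E} {π : Policy A E} {e0 : E} {h : Hist A E}
    (hc : Consistent π h) {a : A} (hne : a ≠ π h) (e : E) (tail : Hist A E) :
    dogma ξ π e0 (h ++ (a, e) :: tail) =
      if e = e0 ∧ ∀ p ∈ tail, p.2 = e0 then ξ.val h else 0 := by
  have h1 := dogmaAux_append (ξ := ξ) (π := π) (e0 := e0) h [] ((a, e) :: tail) (by
    intro k hk; simpa using hc k hk)
  rw [dogma, h1]
  rw [dogmaAux]
  simp [hne]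

end Lemmas3
section Lemmas4
variable {A E : Type*} [Fintype E]

lemma dev_rsum_le {γ : ℕ → ℝ} (r : E → ℝ) (hr : ∀ e : E, 0 ≤ r e ∧ r e ≤ 1)
    {e0 : E} (hr0 : r e0 = 0) (ξ ν ξ' : CCS A E) {π πs : Policy A E} {ε' : ℝ}
    (hε' : 0 ≤ ε')
    (hν : ∀ h : Hist A E, ν.val h = dogma ξ π e0 h)
    (hξ'v : ∀ h : Hist A E, ξ'.val h = (1 / 2) * ν.val h + (ε' / 2) * ξ.val h)
    {h : Hist A E} (hc : Consistent π h) (hne : πs h ≠ π h) (n : ℕ) :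
    rsum r πs ξ' h n ≤ ε' / 2 * ξ.val h := by
  have step : ∀ es : Fin (n+1) → E,
      r (es (Fin.last n)) * ξ'.val (extendH πs h (List.ofFn es)) ≤
        ε' / 2 * ξ.val (extendH πs h (List.ofFn es)) := by
    intro es
    have hofn : List.ofFn es = es 0 :: List.ofFn (fun i => es i.succ) := List.ofFn_succ
    obtain ⟨tail, h1, h2⟩ := extendH_decomp πs (List.ofFn fun i => es i.succ)
      (h ++ [(πs h, es 0)])
    have hext : extendH πs h (List.ofFn es) = h ++ (πs h, es 0) :: tail := by
      rw [hofn]; simp [extendH, h1]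
    have hν' : ν.val (extendH πs h (List.ofFn es)) =
        if es 0 = e0 ∧ ∀ p ∈ tail, p.2 = e0 then ξ.val h else 0 := by
      rw [hν, hext, dogma_dev hc hne]
    by_cases hcond : es 0 = e0 ∧ ∀ p ∈ tail, p.2 = e0
    · have hlast : es (Fin.last n) = e0 := by
        have hm : es (Fin.last n) ∈ List.ofFn es := by
          rw [List.mem_ofFn]; exact ⟨Fin.last n, rfl⟩
        rw [hofn] at hm
        rcases List.mem_cons.mp hm with h' | h'
        · rw [h', hcond.1]
        · rw [← h2] at h'
          obtain ⟨p, hp, hpe⟩ := List.mem_map.mp h'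
          rw [← hpe]; exact hcond.2 p hp
      rw [hlast, hr0, zero_mul]
      exact mul_nonneg (by linarith) (ξ.nonneg _)
    · have hz : ν.val (extendH πs h (List.ofFn es)) = 0 := by rw [hν', if_neg hcond]
      rw [hξ'v, hz, mul_zero, zero_add]
      have h0 : (0:ℝ) ≤ ε' / 2 * ξ.val (extendH πs h (List.ofFn es)) :=
        mul_nonneg (by linarith) (ξ.nonneg _)
      nlinarith [(hr (es (Fin.last n))).1, (hr (es (Fin.last n))).2]
  calc rsum r πs ξ' h n ≤ ∑ es : Fin (n+1) → E, ε' / 2 * ξ.val (extendH πs h (List.ofFn es)) :=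
        Finset.sum_le_sum fun es _ => step es
    _ = ε' / 2 * ∑ es : Fin (n+1) → E, ξ.val (extendH πs h (List.ofFn es)) := by
        rw [Finset.mul_sum]
    _ ≤ ε' / 2 * ξ.val h :=
        mul_le_mul_of_nonneg_left (sumExt_le ξ πs (n+1) h) (by linarith)

lemma half_rsum_le {γ : ℕ → ℝ} (r : E → ℝ) (hr : ∀ e : E, 0 ≤ r e ∧ r e ≤ 1)
    {e0 : E} (ξ ν ξ' : CCS A E) {π : Policy A E} {ε' : ℝ} (hε' : 0 ≤ ε')
    (hν : ∀ h : Hist A E, ν.val h = dogma ξ π e0 h)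
    (hξ'v : ∀ h : Hist A E, ξ'.val h = (1 / 2) * ν.val h + (ε' / 2) * ξ.val h)
    {h : Hist A E} (hc : Consistent π h) (n : ℕ) :
    1 / 2 * rsum r π ξ h n ≤ rsum r π ξ' h n := by
  rw [rsum, rsum, Finset.mul_sum]
  apply Finset.sum_le_sum
  intro es _
  have hcext : Consistent π (extendH π h (List.ofFn es)) := consistent_extendH _ h hc
  have hveq : ν.val (extendH π h (List.ofFn es)) = ξ.val (extendH π h (List.ofFn es)) := by
    rw [hν, dogma_eq_of_consistent hcext]
  rw [hξ'v, hveq]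
  have h1 := (hr (es (Fin.last n))).1
  have h2 := mul_nonneg (mul_nonneg h1 (by linarith : (0:ℝ) ≤ ε' / 2))
    (ξ.nonneg (extendH π h (List.ofFn es)))
  nlinarith [h2]

lemma opt_follows {A E : Type*} [Fintype E] {γ : ℕ → ℝ} (hγ0 : ∀ t, 0 ≤ γ t)
    (hγs : Summable γ) {r : E → ℝ} (hr : ∀ e : E, 0 ≤ r e ∧ r e ≤ 1)
    {e0 : E} (hr0 : r e0 = 0) {ξ : CCS A E} {π : Policy A E}
    (ν ξ' : CCS A E) {ε' : ℝ} (hε'0 : 0 < ε')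
    (hν : ∀ h : Hist A E, ν.val h = dogma ξ π e0 h)
    (hξ'v : ∀ h : Hist A E, ξ'.val h = (1 / 2) * ν.val h + (ε' / 2) * ξ.val h)
    (πs : Policy A E) (hopt : ∀ h : Hist A E, V γ r πs ξ' h = VOpt γ r ξ' h)
    {h : Hist A E} (hc : Consistent π h)
    (hVpos : 0 < V γ r π ξ h) (hla : ε' < V γ r π ξ h) :
    πs h = π h := by
  by_contra hne
  set t := h.length + 1 with ht
  -- positivity of the pieces
  have hcnd : 0 < Gam γ t ∧ 0 < ξ.val h := by
    by_contra hcnd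
    rw [V_eq, if_neg hcnd] at hVpos
    exact lt_irrefl 0 hVpos
  obtain ⟨hG, hξh⟩ := hcnd
  have hξ'h : 0 < ξ'.val h := by
    have := ν.nonneg h
    have := ξ.nonneg h
    rw [hξ'v]
    nlinarith
  set U := ∑' n : ℕ, γ (t + n) * rsum r πs ξ' h n with hU
  set L := ∑' n : ℕ, γ (t + n) * rsum r π ξ' h n with hL
  set T0 := ∑' n : ℕ, γ (t + n) * rsum r π ξ h n with hT0
  have f1 : V γ r πs ξ' h = 1 / (Gam γ t * ξ'.val h) * U := by
    rw [V_eq, if_pos ⟨hG, hξ'h⟩]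
  have f2 : V γ r π ξ' h = 1 / (Gam γ t * ξ'.val h) * L := by
    rw [V_eq, if_pos ⟨hG, hξ'h⟩]
  have f5 : V γ r π ξ h = 1 / (Gam γ t * ξ.val h) * T0 := by
    rw [V_eq, if_pos ⟨hG, hξh⟩]
  -- upper bound on U
  have f3 : U ≤ Gam γ t * (ε' / 2 * ξ.val h) := by
    have : ∑' n : ℕ, γ (t + n) * (ε' / 2 * ξ.val h) = Gam γ t * (ε' / 2 * ξ.val h) :=
      tsum_mul_right
    rw [hU, ← this]
    refine Summable.tsum_le_tsum (fun n => mul_le_mul_of_nonneg_left ?_ (hγ0 _))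
      (summable_V hγ0 hγs r hr πs ξ' h t) ((summable_shift hγs t).mul_right _)
    exact dev_rsum_le (γ := γ) r hr hr0 ξ ν ξ' (le_of_lt hε'0) hν hξ'v hc hne n
  -- lower bound on L
  have f4 : 1 / 2 * T0 ≤ L := by
    have hs : ∑' n : ℕ, 1 / 2 * (γ (t + n) * rsum r π ξ h n) = 1 / 2 * T0 := tsum_mul_left
    rw [hL, ← hs]
    refine Summable.tsum_le_tsum (fun n => ?_)
      ((summable_V hγ0 hγs r hr π ξ h t).mul_left _)
      (summable_V hγ0 hγs r hr π ξ' h t)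
    have := half_rsum_le (γ := γ) r hr ξ ν ξ' (le_of_lt hε'0) hν hξ'v hc n
    nlinarith [hγ0 (t + n)]
  -- optimality
  have f6 : V γ r π ξ' h ≤ V γ r πs ξ' h := by
    rw [hopt h]
    exact le_ciSup (bddAbove_V hγ0 hγs r hr ξ' h) π
  have hpos : 0 < 1 / (Gam γ t * ξ'.val h) := by positivity
  have hLU : L ≤ U := by
    rw [f1, f2] at f6
    exact le_of_mul_le_mul_left (by linarith [f6]) hpos
  have hT0eq : T0 = Gam γ t * ξ.val h * V γ r π ξ h := by
    rw [f5]; field_simp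
  rw [hT0eq] at f4
  nlinarith [mul_pos (mul_pos hG hξh) (sub_pos.mpr hla)]

end Lemmas4
section Lemmas5
variable {A E : Type*} [Fintype E]

lemma extend_agree {π πs : Policy A E} {T : ℕ}
    (hagree : ∀ h : Hist A E, Consistent π h → h.length < T → πs h = π h) :
    ∀ (l : List E) (h : Hist A E), Consistent π h → h.length + l.length ≤ T →
      extendH πs h l = extendH π h l := by
  intro l
  induction l with
  | nil => intro h _ _; rfl
  | cons e l ih =>
    intro h hc hlen
    have hl : h.length < T := by simp only [List.length_cons] at hlen; omega
    have ha := hagree h hc hl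
    simp only [extendH, ha]
    exact ih _ (consistent_snoc hc e) (by simp only [List.length_append,
      List.length_cons, List.length_nil] at *; omega)

end Lemmas5

lemma abs_tsum_diff_le (f g b : ℕ → ℝ) (hf : Summable f) (hg : Summable g)
    (hb : Summable b) (T : ℕ) (h0 : ∀ n, n < T → f n = g n)
    (hbd : ∀ n, |f n - g n| ≤ b n) :
    |∑' n, f n - ∑' n, g n| ≤ ∑' i, b (i + T) := by
  have hsd : Summable (fun n => f n - g n) := hf.sub hg
  have habs : Summable (fun n => |f n - g n|) := hsd.abs
  have h1 : |∑' n, f n - ∑' n, g n| ≤ ∑' n, |f n - g n| := by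
    rw [← Summable.tsum_sub hf hg]
    exact abs_le.mpr ⟨by
      rw [← tsum_neg]
      exact Summable.tsum_le_tsum (fun n => neg_abs_le _) habs.neg hsd,
      Summable.tsum_le_tsum (fun n => le_abs_self _) hsd habs⟩
  have h2 : ∑' n, |f n - g n| = ∑ i ∈ Finset.range T, |f i - g i| + ∑' i, |f (i + T) - g (i + T)| :=
    (Summable.sum_add_tsum_nat_add T habs).symm
  have h3 : ∑ i ∈ Finset.range T, |f i - g i| = 0 := by
    apply Finset.sum_eq_zero
    intro i hi
    rw [h0 i (Finset.mem_range.mp hi), sub_self, abs_zero]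
  have h4 : ∑' i, |f (i + T) - g (i + T)| ≤ ∑' i, b (i + T) :=
    Summable.tsum_le_tsum (fun i => hbd (i + T)) ((summable_nat_add_iff T).mpr habs)
      ((summable_nat_add_iff T).mpr hb)
  linarith

set_option maxHeartbeats 1000000 in
/-- **AIXI emulating arbitrary policies (core construction).** For a suitable `ε'`,
every `ξ'`-optimal policy for the dogmatic mixture `ξ' = (1/2)·ν + (ε'/2)·ξ`
achieves a value `ε`-close to that of `π` in every environment. -/
theorem emulation {A E : Type*} [Fintype A] [Nonempty A] [Fintype E] [Nonempty E]
    (γ : ℕ → ℝ) (hγ0 : ∀ t, 0 ≤ γ t) (hγs : Summable γ)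
    (r : E → ℝ) (hr : ∀ e : E, 0 ≤ r e ∧ r e ≤ 1)
    (hΓ1 : 0 < Gam γ 1)
    (e0 : E) (hr0 : r e0 = 0)
    (ξ : CCS A E) (hfs : FullSupport ξ)
    (π : Policy A E) (hπ : ∀ h : Hist A E, Consistent π h → 0 < V γ r π ξ h)
    (ε : ℝ) (hε : 0 < ε) :
    ∃ ε' : ℝ, 0 < ε' ∧ ε' ≤ 1 ∧
      ∀ ν ξ' : CCS A E,
        (∀ h : Hist A E, ν.val h = dogma ξ π e0 h) →
        (∀ h : Hist A E, ξ'.val h = (1 / 2) * ν.val h + (ε' / 2) * ξ.val h) →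
        ∀ πs : Policy A E, (∀ h : Hist A E, V γ r πs ξ' h = VOpt γ r ξ' h) →
          ∀ μ : CCS A E, |V γ r πs μ [] - V γ r π μ []| < ε := by
  -- pick the horizon `T`
  have htail : ∀ᶠ i in Filter.atTop, (∑' k : ℕ, γ (k + i)) < ε * Gam γ 1 :=
    (tendsto_sum_nat_add γ).eventually (Filter.Tendsto.eventually_lt_const (by positivity)
      Filter.tendsto_id)
  obtain ⟨i0, hi0⟩ := Filter.eventually_atTop.mp htail
  set T := max 1 i0 with hT
  have hT1 : 1 ≤ T := le_max_left _ _
  have hGamT : Gam γ (1 + T) < ε * Gam γ 1 := by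
    have : Gam γ (1 + T) = ∑' k : ℕ, γ (k + (1 + T)) :=
      tsum_congr fun k => by rw [add_comm]
    rw [this]
    have hTi : i0 ≤ T := le_max_right 1 i0
    exact hi0 (1 + T) (by omega)
  -- the finite set of short consistent histories
  set HS : Finset (Hist A E) :=
    ((Finset.range T).biUnion fun n =>
      Finset.image (fun v : Fin n → A × E => List.ofFn v) Finset.univ).filter
      (fun h => Consistent π h) with hHS
  have hnil : ([] : Hist A E) ∈ HS := by
    rw [hHS, Finset.mem_filter]
    refine ⟨Finset.mem_biUnion.mpr ⟨0, Finset.mem_range.mpr (by omega), ?_⟩,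
      consistent_nil π⟩
    exact Finset.mem_image.mpr ⟨fun i => i.elim0, Finset.mem_univ _, by simp⟩
  have hmem : ∀ h : Hist A E, Consistent π h → h.length < T → h ∈ HS := by
    intro h hc hl
    rw [hHS, Finset.mem_filter]
    refine ⟨Finset.mem_biUnion.mpr ⟨h.length, Finset.mem_range.mpr hl, ?_⟩, hc⟩
    exact Finset.mem_image.mpr ⟨h.get, Finset.mem_univ _, List.ofFn_get h⟩
  set m := HS.inf' ⟨[], hnil⟩ (fun h => V γ r π ξ h) with hm
  have hm0 : 0 < m := by
    rw [hm]; apply (Finset.lt_inf'_iff _).mpr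
    intro h hh
    exact hπ h (Finset.mem_filter.mp hh).2
  refine ⟨min 1 (m / 2), by positivity, min_le_left _ _, ?_⟩
  set ε' := min 1 (m / 2) with hε'
  have hε'0 : 0 < ε' := by positivity
  have hε'lt : ∀ h : Hist A E, Consistent π h → h.length < T → ε' < V γ r π ξ h := by
    intro h hc hl
    calc ε' ≤ m / 2 := min_le_right _ _
      _ < m := by linarith
      _ ≤ V γ r π ξ h := Finset.inf'_le _ (hmem h hc hl)
  intro ν ξ' hν hξ'v πs hopt μ
  have hfollow : ∀ h : Hist A E, Consistent π h → h.length < T → πs h = π h :=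
    fun h hc hl => opt_follows hγ0 hγs hr hr0 ν ξ' hε'0 hν hξ'v πs hopt hc
      (hπ h hc) (hε'lt h hc hl)
  have hagreeExt : ∀ l : List E, l.length ≤ T → extendH πs [] l = extendH π [] l :=
    fun l hl => extend_agree hfollow l [] (consistent_nil π) (by simpa using hl)
  by_cases hμ : 0 < μ.val []
  · -- main case
    have hcnd : 0 < Gam γ ((List.length ([] : Hist A E)) + 1) ∧ 0 < μ.val [] :=
      ⟨by simpa using hΓ1, hμ⟩
    have key : ∀ n : ℕ, n < T → rsum r πs μ [] n = rsum r π μ [] n := by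
      intro n hn
      refine Finset.sum_congr rfl fun es _ => ?_
      rw [hagreeExt (List.ofFn es) (by simp; omega)]
    set fU : ℕ → ℝ := fun n => γ (List.length ([] : Hist A E) + 1 + n) * rsum r πs μ [] n
      with hfU
    set fW : ℕ → ℝ := fun n => γ (List.length ([] : Hist A E) + 1 + n) * rsum r π μ [] n
      with hfW
    have hsU : Summable fU := summable_V hγ0 hγs r hr πs μ [] _
    have hsW : Summable fW := summable_V hγ0 hγs r hr π μ [] _
    have hVs : V γ r πs μ [] = 1 / (Gam γ ((List.length ([] : Hist A E)) + 1) * μ.val []) *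
        ∑' n, fU n := by rw [V_eq, if_pos hcnd]
    have hVp : V γ r π μ [] = 1 / (Gam γ ((List.length ([] : Hist A E)) + 1) * μ.val []) *
        ∑' n, fW n := by rw [V_eq, if_pos hcnd]
    -- bound on the difference of the two sums
    have hbd : ∀ n, |fU n - fW n| ≤ γ (1 + n) * μ.val [] := by
      intro n
      have hbn : 0 ≤ γ (1 + n) * μ.val [] := mul_nonneg (hγ0 _) (le_of_lt hμ)
      by_cases hn : n < T
      · rw [hfU, hfW]
        simp only [key n hn, sub_self, abs_zero]
        exact hbn
      · rw [hfU, hfW]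
        simp only []
        rw [← mul_sub, abs_mul, abs_of_nonneg (hγ0 _)]
        have h1 : List.length ([] : Hist A E) + 1 + n = 1 + n := by simp
        rw [h1]
        refine mul_le_mul_of_nonneg_left ?_ (hγ0 _)
        rw [abs_sub_le_iff]
        constructor
        · have := rsum_le r hr πs μ [] n
          have := rsum_nonneg r hr π μ [] n
          linarith
        · have := rsum_le r hr π μ [] n
          have := rsum_nonneg r hr πs μ [] n
          linarith
    have habs : |∑' n, fU n - ∑' n, fW n| ≤ Gam γ (1 + T) * μ.val [] := by
      have h5 := abs_tsum_diff_le fU fW (fun n => γ (1 + n) * μ.val []) hsU hsW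
        ((summable_shift hγs 1).mul_right _) T (fun n hn => by rw [hfU, hfW]; simp only [key n hn]) hbd
      refine le_trans h5 (le_of_eq ?_)
      have h6 : ∀ i : ℕ, γ (1 + (i + T)) * μ.val [] = γ (1 + T + i) * μ.val [] := by
        intro i; congr 2; omega
      rw [tsum_congr h6]
      exact tsum_mul_right
    have hG1 : Gam γ ((List.length ([] : Hist A E)) + 1) = Gam γ 1 := by norm_num
    rw [hVs, hVp, ← mul_sub, abs_mul, hG1]
    have hpos : (0:ℝ) < Gam γ 1 * μ.val [] := by positivity
    rw [abs_of_nonneg (by positivity : (0:ℝ) ≤ 1 / (Gam γ 1 * μ.val []))]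
    calc 1 / (Gam γ 1 * μ.val []) * |∑' n, fU n - ∑' n, fW n|
        ≤ 1 / (Gam γ 1 * μ.val []) * (Gam γ (1 + T) * μ.val []) :=
          mul_le_mul_of_nonneg_left habs (by positivity)
      _ = Gam γ (1 + T) / Gam γ 1 := by field_simp
      _ < ε := by rw [div_lt_iff₀ hΓ1]; linarith
  · -- degenerate case: μ([]) = 0
    have h1 : V γ r πs μ [] = 0 := by rw [V_eq, if_neg (fun hx => hμ hx.2)]
    have h2 : V γ r π μ [] = 0 := by rw [V_eq, if_neg (fun hx => hμ hx.2)]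
    rw [h1, h2, sub_zero, abs_zero]
    exact hε
end

section
/- (Computable policies are dense.) Let A and E be finite types with decidable equality (so that List (A × E) is Primcodable and computability of policies π : List (A × E) → A is Mathlib's Computable). For every CCS ξ, the set { V^π_ξ(ϵ) : π a computable policy } is dense in the set { V^π_ξ(ϵ) : π any policy } as subsets of ℝ; equivalently, for every policy π and every ε > 0 there is a computable policy π̃ with |V^{π̃}_ξ(ϵ) − V^π_ξ(ϵ)| < ε. -/
open scoped Classical

section AuxLemmas

variable {A E : Type*}

private lemma sum_extendH_le [Fintype E] (ν : CCS A E) (π : Policy A E) :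
    ∀ (n : ℕ) (h : Hist A E),
      (∑ es : Fin n → E, ν.val (extendH π h (List.ofFn es))) ≤ ν.val h := by
  intro n
  induction n with
  | zero =>
    intro h
    simp [extendH]
  | succ n ih =>
    intro h
    have hsplit : (∑ es : Fin (n + 1) → E, ν.val (extendH π h (List.ofFn es)))
        = ∑ e : E, ∑ t : Fin n → E,
            ν.val (extendH π h (List.ofFn (Fin.cons e t))) := by
      rw [← Equiv.sum_comp (Fin.consEquiv (fun _ : Fin (n + 1) => E))
        (fun es => ν.val (extendH π h (List.ofFn es))), Fintype.sum_prod_type]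
      rfl
    rw [hsplit]
    have hstep : ∀ (e : E) (t : Fin n → E),
        List.ofFn (Fin.cons e t : Fin (n + 1) → E) = e :: List.ofFn t := by
      intro e t
      simp [List.ofFn_succ]
    calc (∑ e : E, ∑ t : Fin n → E, ν.val (extendH π h (List.ofFn (Fin.cons e t))))
        ≤ ∑ e : E, ν.val (h ++ [(π h, e)]) := by
          refine Finset.sum_le_sum fun e _ => ?_
          have : ∀ t : Fin n → E, ν.val (extendH π h (List.ofFn (Fin.cons e t)))
              = ν.val (extendH π (h ++ [(π h, e)]) (List.ofFn t)) := by
            intro t; rw [hstep]; rfl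
          simp only [this]
          exact ih _
      _ ≤ ν.val h := ν.chrono h (π h)

/-- The `n`-th summand of the value at the empty history. -/
private noncomputable def SVal [Fintype E] (ξ : CCS A E) (r : E → ℝ)
    (ρ : Policy A E) (n : ℕ) : ℝ :=
  ∑ es : Fin (n + 1) → E, r (es (Fin.last n)) * ξ.val (extendH ρ [] (List.ofFn es))

private lemma SVal_nonneg [Fintype E] (ξ : CCS A E) (r : E → ℝ)
    (hr : ∀ e : E, 0 ≤ r e ∧ r e ≤ 1) (ρ : Policy A E) (n : ℕ) :
    0 ≤ SVal ξ r ρ n :=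
  Finset.sum_nonneg fun es _ => mul_nonneg (hr _).1 (ξ.nonneg _)

private lemma SVal_le [Fintype E] (ξ : CCS A E) (r : E → ℝ)
    (hr : ∀ e : E, 0 ≤ r e ∧ r e ≤ 1) (ρ : Policy A E) (n : ℕ) :
    SVal ξ r ρ n ≤ ξ.val [] := by
  calc SVal ξ r ρ n
      ≤ ∑ es : Fin (n + 1) → E, ξ.val (extendH ρ [] (List.ofFn es)) :=
        Finset.sum_le_sum fun es _ =>
          mul_le_of_le_one_left (ξ.nonneg _) (hr _).2
    _ ≤ ξ.val [] := sum_extendH_le ξ ρ (n + 1) []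

private lemma extendH_congr (π π' : Policy A E) (N : ℕ)
    (hag : ∀ h : Hist A E, h.length < N → π h = π' h) :
    ∀ (es : List E) (h : Hist A E), h.length + es.length ≤ N →
      extendH π h es = extendH π' h es := by
  intro es
  induction es with
  | nil => intro h _; rfl
  | cons e es ih =>
    intro h hlen
    have h1 : h.length < N := by simp at hlen; omega
    have h2 : π h = π' h := hag h h1
    show extendH π (h ++ [(π h, e)]) es = extendH π' (h ++ [(π' h, e)]) es
    rw [← h2]
    apply ih
    simp at hlen ⊢
    omega

/-- All lists over a finite type of a given length. -/
private noncomputable def allLists (σ : Type*) [Fintype σ] : ℕ → List (List σ) :=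
  fun n => Nat.rec [[]] (fun _ ih => (Finset.univ.toList (α := σ)).flatMap fun a =>
      ih.map (a :: ·)) n

private lemma allLists_zero (σ : Type*) [Fintype σ] : allLists σ 0 = [[]] := rfl

private lemma allLists_succ (σ : Type*) [Fintype σ] (n : ℕ) :
    allLists σ (n + 1) = (Finset.univ.toList (α := σ)).flatMap fun a =>
      (allLists σ n).map (a :: ·) := rfl

private lemma mem_allLists {σ : Type*} [Fintype σ] :
    ∀ l : List σ, l ∈ allLists σ l.length := by
  intro l
  induction l with
  | nil => simp [allLists_zero]
  | cons a l ih =>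
    show a :: l ∈ allLists σ (l.length + 1)
    rw [allLists_succ]
    refine List.mem_flatMap.2 ⟨a, by simp, ?_⟩
    exact List.mem_map.2 ⟨l, ih, rfl⟩

private lemma length_of_mem_allLists {σ : Type*} [Fintype σ] :
    ∀ (k : ℕ) (l : List σ), l ∈ allLists σ k → l.length = k := by
  intro k
  induction k with
  | zero => intro l hl; rw [allLists_zero] at hl; simp at hl; simp [hl]
  | succ k ih =>
    intro l hl
    rw [allLists_succ] at hl
    rcases List.mem_flatMap.1 hl with ⟨a, _, hla⟩
    rcases List.mem_map.1 hla with ⟨l', hl', rfl⟩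
    simp [ih l' hl']

private lemma foldr_lookup_eq [DecidableEq A] [DecidableEq E]
    (π : Policy A E) (N : ℕ) (a0 : A) :
    ∀ (T : List (Hist A E × A)) (h : Hist A E),
      (∀ p ∈ T, p.1.length < N ∧ p.2 = π p.1) →
      (h.length < N → h ∈ T.map Prod.fst) →
      T.foldr (fun p acc => if p.1 = h then p.2 else acc) a0
        = if h.length < N then π h else a0 := by
  intro T
  induction T with
  | nil =>
    intro h _ hcov
    have : ¬ h.length < N := fun hlt => by simpa using hcov hlt
    simp [this]
  | cons p T ih =>
    intro h hmem hcov
    by_cases hph : p.1 = h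
    · have h1 := hmem p List.mem_cons_self
      have hlt : h.length < N := hph ▸ h1.1
      simp only [List.foldr_cons, if_pos hph, if_pos hlt]
      rw [h1.2, hph]
    · have : T.foldr (fun p acc => if p.1 = h then p.2 else acc) a0
          = if h.length < N then π h else a0 := by
        refine ih h (fun q hq => hmem q (List.mem_cons_of_mem _ hq)) ?_
        intro hlt
        rcases List.mem_map.1 (hcov hlt) with ⟨q, hq, hq2⟩
        rcases List.mem_cons.1 hq with rfl | hq'
        · exact absurd hq2 hph
        · exact List.mem_map.2 ⟨q, hq', hq2⟩
      simpa [hph] using this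

end AuxLemmas

/-- **Computable policies are dense**: for every policy and every `ε > 0` there is a
computable policy whose value at the empty history is `ε`-close. -/
theorem computable_policies_dense {A E : Type*}
    [Fintype A] [Nonempty A] [DecidableEq A] [Primcodable A]
    [Fintype E] [Nonempty E] [DecidableEq E] [Primcodable E]
    (γ : ℕ → ℝ) (hγ0 : ∀ t, 0 ≤ γ t) (hγs : Summable γ)
    (r : E → ℝ) (hr : ∀ e : E, 0 ≤ r e ∧ r e ≤ 1)
    (ξ : CCS A E) (π : Policy A E) (ε : ℝ) (hε : 0 < ε) :
    ∃ πt : Policy A E, Computable πt ∧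
      |V γ r πt ξ [] - V γ r π ξ []| < ε := by
  classical
  by_cases hc : 0 < Gam γ 1 ∧ 0 < ξ.val []
  swap
  · refine ⟨fun _ => Classical.arbitrary A, Computable.const _, ?_⟩
    have hz : ∀ ρ : Policy A E, V γ r ρ ξ [] = 0 := by
      intro ρ
      simp only [V, List.length_nil, Nat.zero_add]
      rw [if_neg hc]
    rw [hz, hz]
    simpa using hε
  obtain ⟨hΓ, hξ⟩ := hc
  -- choose the horizon M
  have htail : Filter.Tendsto (fun i => ∑' k, γ (k + i)) Filter.atTop (nhds 0) :=
    tendsto_sum_nat_add γ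
  have hpos : 0 < ε * Gam γ 1 := mul_pos hε hΓ
  obtain ⟨M, hM⟩ := Filter.eventually_atTop.1 (htail.eventually_lt_const hpos)
  have hMtail : (∑' k, γ (k + (M + 1))) < ε * Gam γ 1 := hM (M + 1) (by omega)
  -- the computable policy
  set a0 := Classical.arbitrary A with ha0
  set L : List (Hist A E) := (List.range M).flatMap (fun k => allLists (A × E) k) with hL
  set T : List (Hist A E × A) := L.map (fun h => (h, π h)) with hT
  set πt : Policy A E :=
    fun h => T.foldr (fun p acc => if p.1 = h then p.2 else acc) a0 with hπtdef
  have hTmem : ∀ p ∈ T, p.1.length < M ∧ p.2 = π p.1 := by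
    intro p hp
    rcases List.mem_map.1 hp with ⟨h, hh, rfl⟩
    rcases List.mem_flatMap.1 hh with ⟨k, hk, hhk⟩
    have hlen : h.length = k := length_of_mem_allLists k h hhk
    exact ⟨by rw [hlen]; exact List.mem_range.1 hk, rfl⟩
  have hcov : ∀ h : Hist A E, h.length < M → h ∈ T.map Prod.fst := by
    intro h hlt
    have hmemL : h ∈ L :=
      List.mem_flatMap.2 ⟨h.length, List.mem_range.2 hlt, mem_allLists h⟩
    exact List.mem_map.2 ⟨(h, π h), List.mem_map.2 ⟨h, hmemL, rfl⟩, rfl⟩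
  have hπt : ∀ h : Hist A E, πt h = if h.length < M then π h else a0 :=
    fun h => foldr_lookup_eq π M a0 T h hTmem (hcov h)
  have hagree : ∀ h : Hist A E, h.length < M → π h = πt h := by
    intro h hl
    rw [hπt h, if_pos hl]
  have hcomp : Computable πt := by
    have hstep : Primrec₂ (fun (h : Hist A E) (q : (Hist A E × A) × A) =>
        if q.1.1 = h then q.1.2 else q.2) := by
      refine Primrec.ite ?_ ?_ ?_
      · exact Primrec.eq.comp (Primrec.fst.comp (Primrec.fst.comp Primrec.snd)) Primrec.fst
      · exact Primrec.snd.comp (Primrec.fst.comp Primrec.snd)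
      · exact Primrec.snd.comp Primrec.snd
    exact (Primrec.list_foldr (Primrec.const T) (Primrec.const a0) hstep).to_comp
  refine ⟨πt, hcomp, ?_⟩
  -- value formulas
  have hV : ∀ ρ : Policy A E, V γ r ρ ξ []
      = (1 / (Gam γ 1 * ξ.val [])) * ∑' n, γ (1 + n) * SVal ξ r ρ n := by
    intro ρ
    simp only [V, List.length_nil, Nat.zero_add, SVal]
    rw [if_pos ⟨hΓ, hξ⟩]
  have hγ1 : Summable (fun n => γ (1 + n)) :=
    ((summable_nat_add_iff 1).2 hγs).congr (fun n => by rw [add_comm])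
  have hS1 : ∀ (ρ : Policy A E) (n : ℕ), SVal ξ r ρ n ≤ 1 :=
    fun ρ n => (SVal_le ξ r hr ρ n).trans (ξ.le_one [])
  have hsum : ∀ ρ : Policy A E, Summable (fun n => γ (1 + n) * SVal ξ r ρ n) := by
    intro ρ
    refine Summable.of_nonneg_of_le
      (fun n => mul_nonneg (hγ0 _) (SVal_nonneg ξ r hr ρ n))
      (fun n => mul_le_of_le_one_right (hγ0 _) (hS1 ρ n)) hγ1
  have hdiff : V γ r πt ξ [] - V γ r π ξ []
      = (1 / (Gam γ 1 * ξ.val []))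
        * ∑' n, (γ (1 + n) * SVal ξ r πt n - γ (1 + n) * SVal ξ r π n) := by
    rw [hV πt, hV π, ← mul_sub, ← Summable.tsum_sub (hsum πt) (hsum π)]
  -- pointwise bound
  have hpt : ∀ n, |γ (1 + n) * SVal ξ r πt n - γ (1 + n) * SVal ξ r π n|
      ≤ (if n < M then 0 else γ (1 + n) * ξ.val []) := by
    intro n
    by_cases hn : n < M
    · have heq : SVal ξ r πt n = SVal ξ r π n := by
        unfold SVal
        refine Finset.sum_congr rfl (fun es _ => ?_)
        rw [extendH_congr πt π M (fun h hl => (hagree h hl).symm) (List.ofFn es) []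
          (by simp; omega)]
      simp [hn, heq]
    · rw [if_neg hn, ← mul_sub, abs_mul, abs_of_nonneg (hγ0 _)]
      refine mul_le_mul_of_nonneg_left ?_ (hγ0 _)
      rw [abs_le]
      have h1 := SVal_nonneg ξ r hr πt n
      have h2 := SVal_nonneg ξ r hr π n
      have h3 := SVal_le ξ r hr πt n
      have h4 := SVal_le ξ r hr π n
      constructor <;> linarith
  have hbsum : Summable (fun n => if n < M then (0 : ℝ) else γ (1 + n) * ξ.val []) := by
    refine Summable.of_nonneg_of_le ?_ ?_ (hγ1.mul_right (ξ.val []))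
    · intro n
      split
      · exact le_refl 0
      · exact mul_nonneg (hγ0 _) (ξ.nonneg _)
    · intro n
      split
      · exact mul_nonneg (hγ0 _) (ξ.nonneg _)
      · exact le_refl _
  have habs : Summable (fun n =>
      |γ (1 + n) * SVal ξ r πt n - γ (1 + n) * SVal ξ r π n|) :=
    Summable.of_nonneg_of_le (fun n => abs_nonneg _) hpt hbsum
  have hb1 : |∑' n, (γ (1 + n) * SVal ξ r πt n - γ (1 + n) * SVal ξ r π n)|
      ≤ ∑' n, (if n < M then (0 : ℝ) else γ (1 + n) * ξ.val []) := by
    calc |∑' n, (γ (1 + n) * SVal ξ r πt n - γ (1 + n) * SVal ξ r π n)|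
        ≤ ∑' n, |γ (1 + n) * SVal ξ r πt n - γ (1 + n) * SVal ξ r π n| := by
          have habs' : Summable (fun n =>
              ‖γ (1 + n) * SVal ξ r πt n - γ (1 + n) * SVal ξ r π n‖) := by
            simpa only [Real.norm_eq_abs] using habs
          simpa only [Real.norm_eq_abs] using norm_tsum_le_tsum_norm
            (f := fun n => γ (1 + n) * SVal ξ r πt n - γ (1 + n) * SVal ξ r π n) habs'
      _ ≤ _ := Summable.tsum_le_tsum hpt habs hbsum
  have hbval : (∑' n, (if n < M then (0 : ℝ) else γ (1 + n) * ξ.val []))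
      = ξ.val [] * ∑' k, γ (k + (M + 1)) := by
    rw [← Summable.sum_add_tsum_nat_add M hbsum]
    have e1 : (∑ i ∈ Finset.range M,
        (if i < M then (0 : ℝ) else γ (1 + i) * ξ.val [])) = 0 := by
      refine Finset.sum_eq_zero (fun i hi => ?_)
      rw [if_pos (Finset.mem_range.1 hi)]
    have e2 : (∑' i : ℕ, (if i + M < M then (0 : ℝ) else γ (1 + (i + M)) * ξ.val []))
        = ξ.val [] * ∑' k, γ (k + (M + 1)) := by
      have : ∀ i : ℕ, (if i + M < M then (0 : ℝ) else γ (1 + (i + M)) * ξ.val [])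
          = γ (i + (M + 1)) * ξ.val [] := by
        intro i
        rw [if_neg (by omega), show 1 + (i + M) = i + (M + 1) by omega]
      rw [tsum_congr this, tsum_mul_right, mul_comm]
    rw [e1, e2, zero_add]
  have hbound : |V γ r πt ξ [] - V γ r π ξ []|
      ≤ (∑' k, γ (k + (M + 1))) / Gam γ 1 := by
    rw [hdiff, abs_mul, abs_of_nonneg
      (one_div_nonneg.2 (mul_nonneg hΓ.le hξ.le))]
    calc (1 / (Gam γ 1 * ξ.val []))
          * |∑' n, (γ (1 + n) * SVal ξ r πt n - γ (1 + n) * SVal ξ r π n)|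
        ≤ (1 / (Gam γ 1 * ξ.val [])) * (ξ.val [] * ∑' k, γ (k + (M + 1))) := by
          refine mul_le_mul_of_nonneg_left (hb1.trans_eq hbval) ?_
          exact one_div_nonneg.2 (mul_nonneg hΓ.le hξ.le)
      _ = (∑' k, γ (k + (M + 1))) / Gam γ 1 := by
          field_simp
  refine lt_of_le_of_lt hbound ?_
  rw [div_lt_iff₀ hΓ]
  linarith
end
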